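/- If K is a linear subspace of V₀ and ρ: ℝ^S → ℝ^S/K is the quotient map, then ρ maps Λ_K ∩ ∂Δ_S into the boundary of the convex polytope ρ(Δ_S). -/
import Mathlib


open scoped BigOperators

noncomputable section

/-- The simplex of probability distributions on `S`. -/
def Delta (S : Type*) [Fintype S] : Set (S → ℝ) :=
  {μ | (∀ s, 0 ≤ μ s) ∧ ∑ s, μ s = 1}

/-- The (relative) interior of the simplex: strictly positive distributions. -/
def intDelta (S : Type*) [Fintype S] : Set (S → ℝ) :=
  {μ | (∀ s, 0 < μ s) ∧ ∑ s, μ s = 1}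

/-- The hyperplane of vectors with coordinate sum zero. -/
def V0 (S : Type*) [Fintype S] : Set (S → ℝ) :=
  {v | ∑ s, v s = 0}

/-- The set `λ_κ` of distributions satisfying the centrality equation of `κ`
(real powers, `rpow`, so `0 ^ x = 0` for `x > 0`). -/
def lam {S : Type*} [Fintype S] (κ : S → ℝ) : Set (S → ℝ) :=
  {μ ∈ Delta S |
    ∏ s ∈ Finset.univ.filter (fun s => 0 < κ s), (μ s) ^ (κ s) =
    ∏ s ∈ Finset.univ.filter (fun s => κ s < 0), (μ s) ^ (-(κ s))}

/-- `Λ_K`, the intersection of the `λ_κ` over `κ ∈ K`. -/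
def Lam {S : Type*} [Fintype S] (K : Set (S → ℝ)) : Set (S → ℝ) :=
  ⋂ κ ∈ K, lam κ

/-- if `K` is a linear subspace of `V₀` and `ρ : ℝ^S → ℝ^S/K` is the
quotient map (realized as a surjective linear map with kernel `K`), then `ρ` maps
`Λ_K ∩ ∂Δ_S` into the boundary (relative to the affine hull) of the convex
polytope `ρ(Δ_S)`. -/
theorem quotient_maps_LamK_boundary_into_frontier (S : Type*) [Fintype S]
    (K : Submodule ℝ (S → ℝ)) (hKV : (K : Set (S → ℝ)) ⊆ V0 S)
    (Q : Type*) [NormedAddCommGroup Q] [NormedSpace ℝ Q]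
    (ρ : (S → ℝ) →ₗ[ℝ] Q) (hker : LinearMap.ker ρ = K)
    (hsurj : Function.Surjective ρ) :
    ρ '' (Lam (K : Set (S → ℝ)) ∩ {μ ∈ Delta S | ∃ s, μ s = 0}) ⊆
      intrinsicFrontier ℝ (ρ '' Delta S) := by
  rintro x ⟨μ, ⟨hμΛ, hμΔ, s₀, hs₀⟩, rfl⟩
  have : Nonempty S := ⟨s₀⟩
  -- the point is in the intrinsic closure; it suffices to exclude the intrinsic interior
  rw [← intrinsicClosure_diff_intrinsicInterior]
  refine ⟨subset_intrinsicClosure ⟨μ, hμΔ, rfl⟩, fun hInt => ?_⟩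
  -- the uniform distribution
  set ν : S → ℝ := fun _ => (Fintype.card S : ℝ)⁻¹ with hν
  have hcard : (0 : ℝ) < (Fintype.card S : ℝ) := by
    exact_mod_cast Fintype.card_pos
  have hνpos : ∀ s, 0 < ν s := fun s => inv_pos.mpr hcard
  have hνΔ : ν ∈ Delta S := by
    refine ⟨fun s => (hνpos s).le, ?_⟩
    simp [hν, Finset.sum_const, Finset.card_univ]
  -- extract an ε-ball within the affine span
  obtain ⟨x', hx'int, hx'⟩ := mem_intrinsicInterior.mp hInt
  rw [mem_interior_iff_mem_nhds, mem_nhds_subtype] at hx'int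
  obtain ⟨u, hu, hsub⟩ := hx'int
  rw [Metric.mem_nhds_iff] at hu
  obtain ⟨ε, hε, hball⟩ := hu
  rw [hx'] at hball
  -- push past `ρ μ` in the direction away from `ρ ν`
  set t : ℝ := ε / (2 * (‖ρ μ - ρ ν‖ + 1)) with ht
  have hden : (0 : ℝ) < 2 * (‖ρ μ - ρ ν‖ + 1) := by positivity
  have htpos : 0 < t := div_pos hε hden
  set q : Q := ρ μ + t • (ρ μ - ρ ν) with hq
  have hqspan : q ∈ affineSpan ℝ (ρ '' Delta S) := by
    have h1 : ρ μ ∈ affineSpan ℝ (ρ '' Delta S) := subset_affineSpan ℝ _ ⟨μ, hμΔ, rfl⟩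
    have h2 : ρ ν ∈ affineSpan ℝ (ρ '' Delta S) := subset_affineSpan ℝ _ ⟨ν, hνΔ, rfl⟩
    have := AffineSubspace.smul_vsub_vadd_mem _ t h1 h2 h1
    simpa [vsub_eq_sub, vadd_eq_add, hq, add_comm] using this
  have hqdist : dist q (ρ μ) < ε := by
    rw [hq, dist_eq_norm]
    simp only [add_sub_cancel_left, norm_smul, Real.norm_eq_abs, abs_of_pos htpos]
    calc t * ‖ρ μ - ρ ν‖ ≤ t * (‖ρ μ - ρ ν‖ + 1) := by
          nlinarith [norm_nonneg (ρ μ - ρ ν)]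
      _ < ε := by
          rw [ht]
          rw [div_mul_eq_mul_div, div_lt_iff₀ hden]
          nlinarith [norm_nonneg (ρ μ - ρ ν)]
  have hqu : q ∈ u := hball (Metric.mem_ball.mpr hqdist)
  have hqmem : q ∈ ρ '' Delta S :=
    hsub (show (⟨q, hqspan⟩ : {y // y ∈ affineSpan ℝ (ρ '' Delta S)}) ∈ Subtype.val ⁻¹' u from hqu)
  obtain ⟨σ, hσΔ, hσq⟩ := hqmem
  -- the strictly positive preimage witness
  set μ' : S → ℝ := (1 + t)⁻¹ • (σ + t • ν) with hμ'
  have h1t : (0 : ℝ) < 1 + t := by linarith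
  have hμ'pos : ∀ s, 0 < μ' s := fun s => by
    have := hσΔ.1 s
    have := hνpos s
    have : 0 < σ s + t * ν s := by nlinarith
    simp only [hμ', Pi.smul_apply, Pi.add_apply, smul_eq_mul]
    positivity
  have hρμ' : ρ μ' = ρ μ := by
    have : ρ σ + t • ρ ν = (1 + t) • ρ μ := by
      rw [hσq, hq]
      module
    rw [hμ', map_smul, map_add, map_smul, this, smul_smul,
      inv_mul_cancel₀ (ne_of_gt h1t), one_smul]
  -- κ := μ' - μ lies in K
  have hκK : μ' - μ ∈ (K : Set (S → ℝ)) := by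
    rw [← hker]
    simp [LinearMap.mem_ker, map_sub, hρμ']
  have hμlam : μ ∈ lam (μ' - μ) := by
    have := Set.mem_iInter₂.mp hμΛ (μ' - μ) hκK
    exact this
  obtain ⟨-, heq⟩ := hμlam
  -- LHS is zero
  have hs₀mem : s₀ ∈ Finset.univ.filter (fun s => 0 < (μ' - μ) s) := by
    simp [Finset.mem_filter, hs₀, hμ'pos s₀]
  have hLHS : ∏ s ∈ Finset.univ.filter (fun s => 0 < (μ' - μ) s),
      (μ s) ^ ((μ' - μ) s) = 0 := by
    apply Finset.prod_eq_zero hs₀mem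
    rw [hs₀]
    exact Real.zero_rpow (by simp [hs₀]; exact ne_of_gt (hμ'pos s₀))
  -- RHS is positive
  have hRHS : 0 < ∏ s ∈ Finset.univ.filter (fun s => (μ' - μ) s < 0),
      (μ s) ^ (-((μ' - μ) s)) := by
    apply Finset.prod_pos
    intro s hs
    rw [Finset.mem_filter] at hs
    have hμs : 0 < μ s := by
      have := hμ'pos s
      have := hs.2
      simp only [Pi.sub_apply] at this
      linarith
    exact Real.rpow_pos_of_pos hμs _
  rw [heq] at hLHS
  exact absurd hLHS (ne_of_gt hRHS)
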